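/- Let k be a field of prime characteristic p with p ≡ 2 (mod 3), let R = k[x,y]/(x³ + y³), and let 𝔪 = (x,y) be the image of the irrelevant maximal ideal in R. Then for every q = p^e with e ∈ ℕ, one has ℓ_R(R/𝔪^{[q]}) = 3q − 2. -/

import Mathlib

set_option synthInstance.maxHeartbeats 1000000
set_option maxHeartbeats 1000000

open MvPolynomial

/-- The length of an `R`-module `M`: the Krull dimension of the lattice `Submodule R M`. -/
noncomputable def moduleLength (R M : Type*) [Ring R] [AddCommGroup M] [Module R M] : ℕ∞ :=
  WithBot.unbotD 0 (Order.krullDim (Submodule R M))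

/-- The `q`-th bracket power `J^{[q]}` of an ideal: the ideal generated by the `q`-th
powers of the elements of `J`. -/
noncomputable def bracketPow {A : Type*} [CommSemiring A] (J : Ideal A) (q : ℕ) : Ideal A :=
  Ideal.span ((fun x => x ^ q) '' (J : Set A))

/-- The ring `R = k[x,y]/(x³ + y³)`, with `x = X 0` and `y = X 1`. -/
abbrev CubicQuot (K : Type*) [Field K] : Type _ :=
  MvPolynomial (Fin 2) K ⧸
    (Ideal.span {X 0 ^ 3 + X 1 ^ 3} : Ideal (MvPolynomial (Fin 2) K))

open Module




section ML
variable {K R M : Type*} [Field K] [CommRing R] [Algebra K R]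
  [AddCommGroup M] [Module R M] [Module K M] [IsScalarTower K R M]
  [FiniteDimensional K M]

-- step lemma: covering pairs bump finrank by exactly 1
lemma covstep (𝔪 : Ideal R)
    (hres : ∀ r : R, ∃ c : K, r - algebraMap K R c ∈ 𝔪)
    (T : ℕ) (hnil : ∀ (a : R), a ∈ 𝔪 ^ T → ∀ x : M, a • x = 0)
    {N N' : Submodule R M} (hcov : N ⋖ N') :
    finrank K (N'.restrictScalars K) = finrank K (N.restrictScalars K) + 1 := by
  classical
  have hP : ∃ t, 𝔪 ^ t • N' ≤ N := by
    refine ⟨T, Submodule.smul_le.2 fun a ha x hx => ?_⟩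
    rw [hnil a ha x]; exact N.zero_mem
  obtain ⟨j', hj'⟩ : ∃ j', Nat.find hP = j' + 1 := by
    refine ⟨Nat.find hP - 1, ?_⟩
    have hj0 : Nat.find hP ≠ 0 := by
      intro h
      have := Nat.find_spec hP
      rw [h, pow_zero, Ideal.one_eq_top, Submodule.top_smul] at this
      exact (hcov.1.not_ge this)
    omega
  have hPj : 𝔪 ^ (j' + 1) • N' ≤ N := hj' ▸ Nat.find_spec hP
  have hPj' : ¬ (𝔪 ^ j' • N' ≤ N) := Nat.find_min hP (by omega)
  obtain ⟨v, hv1, hv2⟩ := SetLike.not_le_iff_exists.1 hPj'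
  have hvN' : v ∈ N' := Submodule.smul_le_right hv1
  have hvN : (v : M) ∉ N := hv2
  have hmv : ∀ a ∈ 𝔪, a • (v : M) ∈ N := by
    intro a ha
    apply hPj
    rw [pow_succ', ← Ideal.smul_eq_mul, Submodule.smul_assoc]
    exact Submodule.smul_mem_smul ha hv1
  -- N' = N ⊔ span R {v}
  have hN' : N' = N ⊔ Submodule.span R {v} := by
    have hlt : N < N ⊔ Submodule.span R {v} := by
      refine lt_of_le_of_ne le_sup_left (fun h => hvN ?_)
      rw [h]
      exact Submodule.mem_sup_right (Submodule.mem_span_singleton_self v)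
    have hle : N ⊔ Submodule.span R {v} ≤ N' :=
      sup_le hcov.1.le ((Submodule.span_singleton_le_iff_mem _ _).2 hvN')
    rcases hle.lt_or_eq with h | h
    · exact absurd h (hcov.2 hlt)
    · exact h.symm
  -- restrictScalars computation
  have hrs : N'.restrictScalars K = N.restrictScalars K ⊔ Submodule.span K {v} := by
    apply le_antisymm
    · intro x hx
      rw [Submodule.restrictScalars_mem, hN'] at hx
      obtain ⟨n, hn, y, hy, rfl⟩ := Submodule.mem_sup.1 hx
      obtain ⟨r, rfl⟩ := Submodule.mem_span_singleton.1 hy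
      obtain ⟨c, hc⟩ := hres r
      have hrv : r • v = (r - algebraMap K R c) • v + c • v := by
        rw [sub_smul, algebraMap_smul]; abel
      rw [hrv, ← add_assoc]
      refine Submodule.add_mem _ (Submodule.mem_sup_left ?_) (Submodule.mem_sup_right ?_)
      · exact Submodule.add_mem _ hn (hmv _ hc)
      · exact Submodule.smul_mem _ c (Submodule.mem_span_singleton_self v)
    · refine sup_le (fun x hx => hcov.1.le hx) ?_
      rw [Submodule.span_le, Set.singleton_subset_iff]
      exact hvN'
  have hv0 : v ≠ 0 := fun h => hvN (h ▸ N.zero_mem)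
  have hint : (N.restrictScalars K) ⊓ Submodule.span K {v} = ⊥ := by
    rw [eq_bot_iff]
    intro x hx
    rw [Submodule.mem_inf] at hx
    obtain ⟨hx1, hx2⟩ := hx
    obtain ⟨c, rfl⟩ := Submodule.mem_span_singleton.1 hx2
    rcases eq_or_ne c 0 with rfl | hc
    · simp
    · exfalso
      apply hvN
      have : (c⁻¹ • (c • v) : M) ∈ N.restrictScalars K := Submodule.smul_mem _ _ hx1
      rwa [smul_smul, inv_mul_cancel₀ hc, one_smul] at this
  have hfr := Submodule.finrank_sup_add_finrank_inf_eq (N.restrictScalars K)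
    (Submodule.span K {v})
  rw [hint, finrank_span_singleton hv0, finrank_bot] at hfr
  rw [hrs]
  omega

lemma krullDim_eq_finrank (𝔪 : Ideal R)
    (hres : ∀ r : R, ∃ c : K, r - algebraMap K R c ∈ 𝔪)
    (T : ℕ) (hnil : ∀ (a : R), a ∈ 𝔪 ^ T → ∀ x : M, a • x = 0) :
    Order.krullDim (Submodule R M) = ((finrank K M : ℕ∞) : WithBot ℕ∞) := by
  have hNoeth : IsNoetherian R M := isNoetherian_of_tower K inferInstance
  have hArt : IsArtinian R M := isArtinian_of_tower K inferInstance
  obtain ⟨s, hhead, hlast⟩ := exists_compositionSeries_of_isNoetherian_isArtinian R M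
  have key : ∀ i : Fin (s.length + 1), finrank K ((s i).restrictScalars K) = (i : ℕ) := by
    intro i
    induction i using Fin.induction with
    | zero =>
        have h0 : s 0 = ⊥ := hhead
        rw [h0]
        rw [Submodule.restrictScalars_bot, finrank_bot]; simp
    | succ i ih =>
        rw [covstep 𝔪 hres T hnil (s.step i), ih]
        simp
  have hlen : finrank K M = s.length := by
    have := key (Fin.last _)
    have hl : s (Fin.last _) = ⊤ := hlast
    rw [hl] at this
    rw [Submodule.restrictScalars_top, finrank_top] at this
    simpa using this
  apply le_antisymm
  · refine iSup_le fun pser => ?_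
    have mono : ∀ i : Fin (pser.length + 1),
        (i : ℕ) ≤ finrank K ((pser i).restrictScalars K) := by
      intro i
      induction i using Fin.induction with
      | zero => simp
      | succ i ih =>
          have hlt : (pser i.castSucc).restrictScalars K < (pser i.succ).restrictScalars K := by
            refine lt_of_le_of_ne (fun x hx => (show pser i.castSucc < pser i.succ from pser.step i).le hx) fun e =>
              (show pser i.castSucc < pser i.succ from pser.step i).ne (Submodule.restrictScalars_injective K R M e)
          have := Submodule.finrank_lt_finrank_of_lt hlt
          simp only [Fin.coe_castSucc] at ih
          simp only [Fin.val_succ]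
          omega
    have h1 := mono (Fin.last _)
    have h2 : finrank K ((pser (Fin.last _)).restrictScalars K) ≤ finrank K M :=
      Submodule.finrank_le _
    simp only [Fin.val_last] at h1
    exact_mod_cast h1.trans h2
  · have hser : ((s.length : ℕ∞) : WithBot ℕ∞) ≤ Order.krullDim (Submodule R M) := by
      exact_mod_cast Order.LTSeries.length_le_krullDim ⟨s.length, s.toFun, fun i => (s.step i).lt⟩
    rw [hlen]
    exact_mod_cast hser

end ML


section FRsec



variable (K : Type*) [Field K]

/-- normal form of the monomial x^i y^j modulo (x³+y³, x^q, y^q), as an element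
of the free module on ℕ × ℕ. -/
noncomputable def nuMap (q : ℕ) (d : ℕ × ℕ) : (ℕ × ℕ) →₀ K :=
  if q ≤ d.2 + 3 * (d.1 / 3) ∨ (q % 3 ≤ d.1 % 3 ∧ 3 * (q / 3) ≤ d.2 + 3 * (d.1 / 3)) then 0
  else (-1 : K) ^ (d.1 / 3) • Finsupp.single (d.1 % 3, d.2 + 3 * (d.1 / 3)) 1

variable {q : ℕ}

lemma nuMap_a (i j : ℕ) : nuMap K q (i + 3, j) = - nuMap K q (i, j + 3) := by
  unfold nuMap
  have h1 : (i + 3) / 3 = i / 3 + 1 := by omega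
  have h2 : (i + 3) % 3 = i % 3 := by omega
  have h3 : j + 3 * ((i + 3) / 3) = (j + 3) + 3 * (i / 3) := by omega
  have h4 : j + 3 * (i / 3 + 1) = j + 3 + 3 * (i / 3) := by omega
  simp only [h1, h2, h3, h4]
  split_ifs with h
  · simp
  · rw [pow_succ]
    simp [smul_smul]

lemma nuMap_b (i j : ℕ) : nuMap K q (i + q, j) = 0 := by
  unfold nuMap
  rw [if_pos]
  omega

lemma nuMap_c (i j : ℕ) : nuMap K q (i, j + q) = 0 := by
  unfold nuMap
  rw [if_pos]
  left
  omega

lemma nuMap_d {i j : ℕ} (hi : i < 3) (hj : j < q)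
    (h : ¬(q % 3 ≤ i ∧ 3 * (q / 3) ≤ j)) :
    nuMap K q (i, j) = Finsupp.single (i, j) (1 : K) := by
  unfold nuMap
  have h1 : i / 3 = 0 := by omega
  have h2 : i % 3 = i := by omega
  rw [if_neg (by simp only [h1, h2]; omega)]
  simp [h1, h2]

variable (q) in
/-- linear "normal form" map on the polynomial ring -/
noncomputable def phiMap : MvPolynomial (Fin 2) K →ₗ[K] ((ℕ × ℕ) →₀ K) :=
  (basisMonomials (Fin 2) K).constr K fun d => nuMap K q (d 0, d 1)

lemma phiMap_monomial (d : Fin 2 →₀ ℕ) :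
    phiMap K q (monomial d 1) = nuMap K q (d 0, d 1) := by
  have h := (basisMonomials (Fin 2) K).constr_basis K (fun d => nuMap K q (d 0, d 1)) d
  rwa [coe_basisMonomials] at h

lemma mon_eq (a b : ℕ) : (X 0 : MvPolynomial (Fin 2) K) ^ a * X 1 ^ b
    = monomial (Finsupp.single 0 a + Finsupp.single 1 b) 1 := by
  rw [X_pow_eq_monomial, X_pow_eq_monomial, monomial_mul, one_mul]

lemma phiMap_xy (a b : ℕ) :
    phiMap K q ((X 0 : MvPolynomial (Fin 2) K) ^ a * X 1 ^ b) = nuMap K q (a, b) := by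
  rw [mon_eq, phiMap_monomial]
  congr 1 <;> simp [Finsupp.single_apply]

lemma monomial_eq_xy (d : Fin 2 →₀ ℕ) :
    (monomial d 1 : MvPolynomial (Fin 2) K) = X 0 ^ (d 0) * X 1 ^ (d 1) := by
  have hd : d = Finsupp.single 0 (d 0) + Finsupp.single 1 (d 1) := by
    ext i
    fin_cases i <;> simp [Finsupp.single_apply]
  rw [mon_eq, ← hd]

variable (q) in
/-- the "stable kernel" of `phiMap`, an ideal -/
noncomputable def kerT : Ideal (MvPolynomial (Fin 2) K) where
  carrier := {p | ∀ h, phiMap K q (h * p) = 0}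
  add_mem' := by
    intro a b ha hb h
    rw [mul_add, map_add, ha h, hb h, add_zero]
  zero_mem' := by
    intro h
    rw [mul_zero, map_zero]
  smul_mem' := by
    intro r p hp h
    rw [smul_eq_mul, ← mul_assoc]
    exact hp (h * r)

lemma mem_kerT_of_monomials {p : MvPolynomial (Fin 2) K}
    (hp : ∀ d : Fin 2 →₀ ℕ, phiMap K q (monomial d 1 * p) = 0) : p ∈ kerT K q := by
  intro h
  induction h using MvPolynomial.induction_on' with
  | monomial d c =>
      have : (monomial d c : MvPolynomial (Fin 2) K) = c • monomial d 1 := by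
        rw [smul_monomial, smul_eq_mul, mul_one]
      rw [this, smul_mul_assoc, map_smul, hp d, smul_zero]
  | add f g hf hg =>
      rw [add_mul, map_add, hf, hg, add_zero]

lemma f_mem_kerT : (X 0 ^ 3 + X 1 ^ 3 : MvPolynomial (Fin 2) K) ∈ kerT K q := by
  apply mem_kerT_of_monomials
  intro d
  rw [monomial_eq_xy]
  have : (X 0 ^ (d 0) * X 1 ^ (d 1)) * ((X 0 : MvPolynomial (Fin 2) K) ^ 3 + X 1 ^ 3)
      = X 0 ^ (d 0 + 3) * X 1 ^ (d 1) + X 0 ^ (d 0) * X 1 ^ (d 1 + 3) := by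
    ring
  rw [this, map_add, phiMap_xy, phiMap_xy, nuMap_a, neg_add_cancel]

lemma xq_mem_kerT : (X 0 ^ q : MvPolynomial (Fin 2) K) ∈ kerT K q := by
  apply mem_kerT_of_monomials
  intro d
  rw [monomial_eq_xy]
  have : (X 0 ^ (d 0) * X 1 ^ (d 1)) * ((X 0 : MvPolynomial (Fin 2) K) ^ q)
      = X 0 ^ (d 0 + q) * X 1 ^ (d 1) := by ring
  rw [this, phiMap_xy, nuMap_b]

lemma yq_mem_kerT : (X 1 ^ q : MvPolynomial (Fin 2) K) ∈ kerT K q := by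
  apply mem_kerT_of_monomials
  intro d
  rw [monomial_eq_xy]
  have : (X 0 ^ (d 0) * X 1 ^ (d 1)) * ((X 1 : MvPolynomial (Fin 2) K) ^ q)
      = X 0 ^ (d 0) * X 1 ^ (d 1 + q) := by ring
  rw [this, phiMap_xy, nuMap_c]

lemma phiMap_vanish {z : MvPolynomial (Fin 2) K}
    (hz : z ∈ Ideal.span {X 0 ^ 3 + X 1 ^ 3, X 0 ^ q, X 1 ^ q}) :
    phiMap K q z = 0 := by
  have hle : Ideal.span {(X 0 : MvPolynomial (Fin 2) K) ^ 3 + X 1 ^ 3, X 0 ^ q, X 1 ^ q}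
      ≤ kerT K q := by
    rw [Ideal.span_le]
    rintro z hz
    simp only [Set.mem_insert_iff, Set.mem_singleton_iff] at hz
    rcases hz with rfl | rfl | rfl
    · exact f_mem_kerT K
    · exact xq_mem_kerT K
    · exact yq_mem_kerT K
  have := hle hz 1
  rwa [one_mul] at this

variable (q) in
noncomputable def Ispan : Ideal (MvPolynomial (Fin 2) K) :=
  Ideal.span {X 0 ^ 3 + X 1 ^ 3, X 0 ^ q, X 1 ^ q}

variable (q) in
noncomputable def Bpairs : Finset (ℕ × ℕ) :=
  (Finset.range 3 ×ˢ Finset.range q).filter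
    fun pr => ¬(q % 3 ≤ pr.1 ∧ 3 * (q / 3) ≤ pr.2)

lemma mem_Bpairs {i j : ℕ} :
    (i, j) ∈ Bpairs q ↔ i < 3 ∧ j < q ∧ ¬(q % 3 ≤ i ∧ 3 * (q / 3) ≤ j) := by
  simp only [Bpairs, Finset.mem_filter, Finset.mem_product, Finset.mem_range]
  tauto

variable (q) in
noncomputable def fam : (Bpairs q) → (MvPolynomial (Fin 2) K ⧸ Ispan K q) :=
  fun p => Ideal.Quotient.mk _ (X 0 ^ (p : ℕ × ℕ).1 * X 1 ^ (p : ℕ × ℕ).2)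

lemma fam_indep : LinearIndependent K (fam K q) := by
  rw [linearIndependent_iff']
  intro s g hsum i hi
  have hz : (∑ p ∈ s, g p • (X 0 ^ (p : ℕ × ℕ).1 * X 1 ^ (p : ℕ × ℕ).2)
      : MvPolynomial (Fin 2) K) ∈ Ispan K q := by
    rw [← Ideal.Quotient.eq_zero_iff_mem]
    have hmk := map_sum (Ideal.Quotient.mkₐ K (Ispan K q)).toLinearMap
      (fun p => g p • (X 0 ^ (p : ℕ × ℕ).1 * X 1 ^ (p : ℕ × ℕ).2)) s
    simp only [map_smul] at hmk
    have h0 : (Ideal.Quotient.mkₐ K (Ispan K q)).toLinearMap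
        (∑ p ∈ s, g p • (X 0 ^ (p : ℕ × ℕ).1 * X 1 ^ (p : ℕ × ℕ).2)) = 0 := by
      rw [hmk]
      simpa [fam, AlgHom.toLinearMap_apply, Ideal.Quotient.mkₐ_eq_mk] using hsum
    exact h0
  have hphi := phiMap_vanish K (z := ∑ p ∈ s, g p • (X 0 ^ (p : ℕ × ℕ).1 * X 1 ^ (p : ℕ × ℕ).2)) hz
  rw [map_sum] at hphi
  have hterm : ∀ p : (Bpairs q), phiMap K q
      (g p • (X 0 ^ (p : ℕ × ℕ).1 * X 1 ^ (p : ℕ × ℕ).2))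
      = g p • Finsupp.single ((p : ℕ × ℕ)) (1 : K) := by
    intro p
    obtain ⟨⟨i', j'⟩, hp⟩ := p
    rw [mem_Bpairs] at hp
    rw [map_smul, phiMap_xy, nuMap_d K hp.1 hp.2.1 hp.2.2]
  simp only [hterm] at hphi
  have happ := DFunLike.congr_fun hphi ((i : ℕ × ℕ))
  rw [Finsupp.finset_sum_apply] at happ
  rw [Finset.sum_eq_single_of_mem i hi] at happ
  · simpa using happ
  · intro p hp hpi
    have : (p : ℕ × ℕ) ≠ (i : ℕ × ℕ) := fun h => hpi (Subtype.ext h)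
    simp [Finsupp.single_apply, this]

lemma grm_mem : (X 0 ^ (q % 3) * X 1 ^ (3 * (q / 3)) : MvPolynomial (Fin 2) K) ∈ Ispan K q := by
  obtain ⟨c, hc⟩ := sub_dvd_pow_sub_pow ((X 0 : MvPolynomial (Fin 2) K) ^ 3)
    (-(X 1 ^ 3)) (q / 3)
  have hXq : (X 0 : MvPolynomial (Fin 2) K) ^ (q % 3) * ((X 0 ^ 3) ^ (q / 3))
      = X 0 ^ q := by
    rw [← pow_mul, ← pow_add]
    congr 1
    omega
  have hneg : ((-(X 1 ^ 3) : MvPolynomial (Fin 2) K)) ^ (q / 3)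
      = (-1) ^ (q / 3) * X 1 ^ (3 * (q / 3)) := by
    rw [neg_pow, ← pow_mul]
  have key : (X 0 : MvPolynomial (Fin 2) K) ^ q
      - (-1) ^ (q / 3) * (X 0 ^ (q % 3) * X 1 ^ (3 * (q / 3)))
      = X 0 ^ (q % 3) * ((X 0 ^ 3 + X 1 ^ 3) * c) := by
    rw [← sub_neg_eq_add, ← hc, ← hXq]
    rw [hneg]
    ring
  have hw : (X 0 : MvPolynomial (Fin 2) K) ^ (q % 3) * ((X 0 ^ 3 + X 1 ^ 3) * c)
      ∈ Ispan K q :=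
    Ideal.mul_mem_left _ _ (Ideal.mul_mem_right _ _ (Ideal.subset_span (by simp)))
  have hxq : (X 0 : MvPolynomial (Fin 2) K) ^ q ∈ Ispan K q :=
    Ideal.subset_span (by simp)
  have hmem : ((-1 : MvPolynomial (Fin 2) K)) ^ (q / 3)
      * (X 0 ^ (q % 3) * X 1 ^ (3 * (q / 3))) ∈ Ispan K q := by
    have : ((-1 : MvPolynomial (Fin 2) K)) ^ (q / 3)
        * (X 0 ^ (q % 3) * X 1 ^ (3 * (q / 3)))
        = X 0 ^ q - X 0 ^ (q % 3) * ((X 0 ^ 3 + X 1 ^ 3) * c) := by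
      rw [← key]; ring
    rw [this]
    exact Submodule.sub_mem _ hxq hw
  have h1 : ((-1 : MvPolynomial (Fin 2) K)) ^ (q / 3) * ((-1) ^ (q / 3)) = 1 := by
    rw [← pow_add]
    exact Even.neg_one_pow ⟨q / 3, rfl⟩
  have := Ideal.mul_mem_left _ (((-1 : MvPolynomial (Fin 2) K)) ^ (q / 3)) hmem
  rwa [← mul_assoc, h1, one_mul] at this

lemma mk_xy_mem_span : ∀ i j : ℕ, (Ideal.Quotient.mk (Ispan K q)) (X 0 ^ i * X 1 ^ j)
    ∈ Submodule.span K (Set.range (fam K q)) := by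
  intro i
  induction i using Nat.strong_induction_on with
  | _ i ih =>
    intro j
    by_cases hjq : q ≤ j
    · have hmem : (X 0 ^ i * X 1 ^ j : MvPolynomial (Fin 2) K) ∈ Ispan K q := by
        obtain ⟨j', rfl⟩ : ∃ j', j = j' + q := ⟨j - q, by omega⟩
        have he : (X 0 ^ i * X 1 ^ (j' + q) : MvPolynomial (Fin 2) K)
            = (X 0 ^ i * X 1 ^ j') * X 1 ^ q := by ring
        rw [he]
        exact Ideal.mul_mem_left _ _ (Ideal.subset_span (by simp))
      rw [Ideal.Quotient.eq_zero_iff_mem.2 hmem]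
      exact Submodule.zero_mem _
    · by_cases hi3 : 3 ≤ i
      · obtain ⟨i', rfl⟩ : ∃ i', i = i' + 3 := ⟨i - 3, by omega⟩
        have hsum : (X 0 ^ (i' + 3) * X 1 ^ j + X 0 ^ i' * X 1 ^ (j + 3)
            : MvPolynomial (Fin 2) K) ∈ Ispan K q := by
          have he : (X 0 ^ (i' + 3) * X 1 ^ j + X 0 ^ i' * X 1 ^ (j + 3)
              : MvPolynomial (Fin 2) K)
              = (X 0 ^ i' * X 1 ^ j) * (X 0 ^ 3 + X 1 ^ 3) := by ring
          rw [he]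
          exact Ideal.mul_mem_left _ _ (Ideal.subset_span (by simp))
        have h0 := Ideal.Quotient.eq_zero_iff_mem.2 hsum
        rw [RingHom.map_add] at h0
        rw [eq_neg_of_add_eq_zero_left h0]
        exact Submodule.neg_mem _ (ih i' (by omega) (j + 3))
      · by_cases hc : q % 3 ≤ i ∧ 3 * (q / 3) ≤ j
        · have hmem : (X 0 ^ i * X 1 ^ j : MvPolynomial (Fin 2) K) ∈ Ispan K q := by
            obtain ⟨i', rfl⟩ : ∃ i', i = q % 3 + i' := ⟨i - q % 3, by omega⟩
            obtain ⟨j', rfl⟩ : ∃ j', j = 3 * (q / 3) + j' := ⟨j - 3 * (q / 3), by omega⟩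
            have he : (X 0 ^ (q % 3 + i') * X 1 ^ (3 * (q / 3) + j')
                : MvPolynomial (Fin 2) K)
                = (X 0 ^ i' * X 1 ^ j') * (X 0 ^ (q % 3) * X 1 ^ (3 * (q / 3))) := by
              ring
            rw [he]
            exact Ideal.mul_mem_left _ _ (grm_mem K)
          rw [Ideal.Quotient.eq_zero_iff_mem.2 hmem]
          exact Submodule.zero_mem _
        · exact Submodule.subset_span ⟨⟨(i, j), mem_Bpairs.2 ⟨by omega, by omega, hc⟩⟩, rfl⟩

lemma fam_span : ⊤ ≤ Submodule.span K (Set.range (fam K q)) := by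
  rintro z -
  obtain ⟨p, rfl⟩ := Ideal.Quotient.mk_surjective z
  induction p using MvPolynomial.induction_on' with
  | monomial d c =>
      have h1 : (monomial d c : MvPolynomial (Fin 2) K)
          = c • (X 0 ^ (d 0) * X 1 ^ (d 1)) := by
        rw [← monomial_eq_xy, smul_monomial, smul_eq_mul, mul_one]
      rw [h1]
      show (Ideal.Quotient.mkₐ K (Ispan K q)).toLinearMap ((c : K) • (X 0 ^ (d 0) * X 1 ^ (d 1)))
        ∈ Submodule.span K (Set.range (fam K q))
      rw [map_smul]
      exact Submodule.smul_mem _ _ (by exact mk_xy_mem_span K (d 0) (d 1))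
  | add f g hf hg =>
      rw [RingHom.map_add]
      exact Submodule.add_mem _ hf hg

variable (q) in
noncomputable def famBasis : Basis (Bpairs q) K (MvPolynomial (Fin 2) K ⧸ Ispan K q) :=
  Basis.mk (fam_indep K) (fam_span K)

lemma finiteDimensional_quot : FiniteDimensional K (MvPolynomial (Fin 2) K ⧸ Ispan K q) :=
  Module.Finite.of_basis (famBasis K q)

lemma card_Bpairs (hq3 : q % 3 ≠ 0) : (Bpairs q).card = 3 * q - 2 := by
  have hsplit := Finset.card_filter_add_card_filter_not
    (s := Finset.range 3 ×ˢ Finset.range q)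
    (p := fun pr : ℕ × ℕ => q % 3 ≤ pr.1 ∧ 3 * (q / 3) ≤ pr.2)
  have hprod : ((Finset.range 3 ×ˢ Finset.range q).filter
      fun pr : ℕ × ℕ => q % 3 ≤ pr.1 ∧ 3 * (q / 3) ≤ pr.2)
      = ((Finset.range 3).filter fun a => q % 3 ≤ a)
        ×ˢ ((Finset.range q).filter fun b => 3 * (q / 3) ≤ b) :=
    Finset.filter_product _ _
  have h1 : ((Finset.range 3).filter fun a => q % 3 ≤ a) = Finset.Ico (q % 3) 3 := by
    ext a
    simp [Finset.mem_filter, Finset.mem_range, Finset.mem_Ico]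
    omega
  have h2 : ((Finset.range q).filter fun b => 3 * (q / 3) ≤ b)
      = Finset.Ico (3 * (q / 3)) q := by
    ext b
    simp [Finset.mem_filter, Finset.mem_range, Finset.mem_Ico]
    omega
  have hcard : ((Finset.range 3 ×ˢ Finset.range q).filter
      fun pr : ℕ × ℕ => q % 3 ≤ pr.1 ∧ 3 * (q / 3) ≤ pr.2).card
      = (3 - q % 3) * (q % 3) := by
    rw [hprod, Finset.card_product, h1, h2, Nat.card_Ico, Nat.card_Ico]
    congr 1
    omega
  have hprodcard : (Finset.range 3 ×ˢ Finset.range q).card = 3 * q := by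
    simp [Finset.card_product]
  have hB : (Bpairs q).card = ((Finset.range 3 ×ˢ Finset.range q).filter
      fun pr : ℕ × ℕ => ¬(q % 3 ≤ pr.1 ∧ 3 * (q / 3) ≤ pr.2)).card := rfl
  rw [← hB, hprodcard, hcard] at hsplit
  have hr : q % 3 = 1 ∨ q % 3 = 2 := by omega
  rcases hr with hr | hr <;> rw [hr] at hsplit <;> omega

lemma finrank_quot (hq3 : q % 3 ≠ 0) :
    finrank K (MvPolynomial (Fin 2) K ⧸ Ispan K q) = 3 * q - 2 := by
  have := finiteDimensional_quot (K := K) (q := q)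
  rw [finrank_eq_card_basis (famBasis K q), Fintype.card_coe, card_Bpairs hq3]

end FRsec

section Assembly

variable (K : Type*) [Field K]

lemma bracketPow_span_pair {A : Type*} [CommRing A] (p : ℕ) [Fact p.Prime] [CharP A p]
    (e : ℕ) (a b : A) :
    bracketPow (Ideal.span {a, b}) (p ^ e) = Ideal.span {a ^ p ^ e, b ^ p ^ e} := by
  apply le_antisymm
  · rw [bracketPow, Ideal.span_le]
    rintro z ⟨w, hw, rfl⟩
    obtain ⟨u, v, huv⟩ := Ideal.mem_span_pair.1 hw
    simp only
    rw [← huv, add_pow_char_pow, mul_pow, mul_pow]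
    exact Ideal.add_mem _
      (Ideal.mul_mem_left _ _ (Ideal.subset_span (by simp)))
      (Ideal.mul_mem_left _ _ (Ideal.subset_span (by simp)))
  · rw [Ideal.span_le]
    rintro z hz
    simp only [Set.mem_insert_iff, Set.mem_singleton_iff] at hz
    rcases hz with rfl | rfl
    · exact Ideal.subset_span ⟨a, Ideal.subset_span (by simp), rfl⟩
    · exact Ideal.subset_span ⟨b, Ideal.subset_span (by simp), rfl⟩

lemma subC_mem (b : MvPolynomial (Fin 2) K) :
    b - C (constantCoeff b) ∈ (Ideal.span {X 0, X 1} : Ideal (MvPolynomial (Fin 2) K)) := by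
  induction b using MvPolynomial.induction_on with
  | C a => simp
  | add f g hf hg =>
      have := Submodule.add_mem _ hf hg
      rw [map_add, map_add]
      convert this using 1
      ring
  | mul_X f i hf =>
      have h0 : constantCoeff (f * X i : MvPolynomial (Fin 2) K) = 0 := by
        rw [map_mul, constantCoeff_X, mul_zero]
      rw [h0, map_zero, sub_zero]
      refine Ideal.mul_mem_left _ _ (Ideal.subset_span ?_)
      fin_cases i <;> simp

lemma map_span_pair_mk (f g : MvPolynomial (Fin 2) K)
    (I : Ideal (MvPolynomial (Fin 2) K)) :
    Ideal.map (Ideal.Quotient.mk I) (Ideal.span {f, g})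
      = Ideal.span {Ideal.Quotient.mk I f, Ideal.Quotient.mk I g} := by
  rw [Ideal.map_span]
  congr 1
  rw [Set.image_insert_eq, Set.image_singleton]

lemma main_aux (q : ℕ) (hq3 : q % 3 ≠ 0) (Jq : Ideal (CubicQuot K))
    (hJq : Jq = Ideal.map
      (Ideal.Quotient.mk (Ideal.span {X 0 ^ 3 + X 1 ^ 3} : Ideal (MvPolynomial (Fin 2) K)))
      (Ideal.span {X 0 ^ q, X 1 ^ q})) :
    moduleLength (CubicQuot K) (CubicQuot K ⧸ Jq) = ((3 * q - 2 : ℕ) : ℕ∞) := by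
  subst hJq
  -- notation
  set If : Ideal (MvPolynomial (Fin 2) K) := Ideal.span {X 0 ^ 3 + X 1 ^ 3} with hIfdef
  set J2 : Ideal (MvPolynomial (Fin 2) K) := Ideal.span {X 0 ^ q, X 1 ^ q} with hJ2def
  have hmap : Ideal.map (Ideal.Quotient.mk If) J2
      = Ideal.span {(Ideal.Quotient.mk If (X 0)) ^ q, (Ideal.Quotient.mk If (X 1)) ^ q} := by
    rw [hJ2def, map_span_pair_mk, map_pow, map_pow]
  -- linear equivalence with the explicit quotient
  have hsup : If ⊔ J2 = Ispan K q := by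
    rw [Ispan, hIfdef, hJ2def, ← Ideal.span_union, Set.singleton_union]
  have hmkeq : Ideal.map (Ideal.Quotient.mkₐ K If) J2 = Ideal.map (Ideal.Quotient.mk If) J2 := by
    rfl
  have e1 := (DoubleQuot.quotQuotEquivQuotSupₐ K If J2).toLinearEquiv
  rw [hsup, hmkeq] at e1
  haveI hFD : FiniteDimensional K (CubicQuot K ⧸ Ideal.map (Ideal.Quotient.mk If) J2) := by
    haveI := finiteDimensional_quot (K := K) (q := q)
    exact Module.Finite.equiv e1.symm
  have hfr : finrank K (CubicQuot K ⧸ Ideal.map (Ideal.Quotient.mk If) J2) = 3 * q - 2 := by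
    rw [e1.finrank_eq, finrank_quot K hq3]
  -- the maximal ideal of R
  set 𝔪 : Ideal (CubicQuot K) :=
    Ideal.span {Ideal.Quotient.mk If (X 0), Ideal.Quotient.mk If (X 1)} with h𝔪def
  have hres : ∀ r : CubicQuot K, ∃ c : K, r - algebraMap K (CubicQuot K) c ∈ 𝔪 := by
    intro r
    obtain ⟨b, rfl⟩ := Ideal.Quotient.mk_surjective r
    refine ⟨constantCoeff b, ?_⟩
    have halg : algebraMap K (CubicQuot K) (constantCoeff b)
        = Ideal.Quotient.mk If (C (constantCoeff b)) := by
      rw [IsScalarTower.algebraMap_apply K (MvPolynomial (Fin 2) K) (CubicQuot K),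
        Ideal.Quotient.algebraMap_eq, MvPolynomial.algebraMap_eq]
    rw [halg, ← RingHom.map_sub, h𝔪def, ← map_span_pair_mk]
    exact Ideal.mem_map_of_mem _ (subC_mem K b)
  have hpow : 𝔪 ^ (q + q) ≤ Ideal.map (Ideal.Quotient.mk If) J2 := by
    rw [hmap]
    have h1 : 𝔪 = Ideal.span {Ideal.Quotient.mk If (X 0)}
        ⊔ Ideal.span {Ideal.Quotient.mk If (X 1)} := by
      rw [h𝔪def, Ideal.span_insert]
    calc 𝔪 ^ (q + q)
        ≤ Ideal.span {Ideal.Quotient.mk If (X 0)} ^ q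
          ⊔ Ideal.span {Ideal.Quotient.mk If (X 1)} ^ q := by
          rw [h1]; exact Ideal.sup_pow_add_le_pow_sup_pow
      _ = Ideal.span {(Ideal.Quotient.mk If (X 0)) ^ q}
          ⊔ Ideal.span {(Ideal.Quotient.mk If (X 1)) ^ q} := by
          rw [Ideal.span_singleton_pow, Ideal.span_singleton_pow]
      _ = Ideal.span {(Ideal.Quotient.mk If (X 0)) ^ q, (Ideal.Quotient.mk If (X 1)) ^ q} := by
          rw [Ideal.span_insert]
  have hnil : ∀ a : CubicQuot K, a ∈ 𝔪 ^ (q + q) →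
      ∀ x : (CubicQuot K ⧸ Ideal.map (Ideal.Quotient.mk If) J2), a • x = 0 := by
    intro a ha x
    obtain ⟨b, rfl⟩ := Ideal.Quotient.mk_surjective x
    have hsm : a • (Ideal.Quotient.mk (Ideal.map (Ideal.Quotient.mk If) J2) b)
        = Ideal.Quotient.mk (Ideal.map (Ideal.Quotient.mk If) J2) (a * b) := rfl
    rw [hsm, Ideal.Quotient.eq_zero_iff_mem]
    exact Ideal.mul_mem_right _ _ (hpow ha)
  rw [moduleLength, krullDim_eq_finrank 𝔪 hres (q + q) hnil, WithBot.unbotD_coe, hfr]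

end Assembly

/-- Let `k` be a field of prime characteristic `p ≡ 2 (mod 3)`, let
`R = k[x,y]/(x³ + y³)` and let `𝔪 = (x, y)` be the image of the irrelevant maximal ideal.
Then for every `q = p^e`, `ℓ_R(R/𝔪^{[q]}) = 3q − 2`. -/
theorem length_cubic_quot (K : Type*) [Field K] (p : ℕ) (hp : p.Prime) [CharP K p]
    (hp3 : p % 3 = 2) (e : ℕ) (q : ℕ) (hq : q = p ^ e) :
    moduleLength (CubicQuot K)
        (CubicQuot K ⧸ bracketPow
          (Ideal.span {Ideal.Quotient.mk _ (X 0), Ideal.Quotient.mk _ (X 1)} :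
            Ideal (CubicQuot K)) q)
      = ((3 * q - 2 : ℕ) : ℕ∞) := by
  haveI hfact : Fact p.Prime := ⟨hp⟩
  have hIf : (Ideal.span {X 0 ^ 3 + X 1 ^ 3} : Ideal (MvPolynomial (Fin 2) K)) ≠ ⊤ := by
    intro h
    have h1 : (1 : MvPolynomial (Fin 2) K)
        ∈ (Ideal.span {X 0 ^ 3 + X 1 ^ 3} : Ideal (MvPolynomial (Fin 2) K)) := by
      rw [h]; trivial
    obtain ⟨c, hc⟩ := Ideal.mem_span_singleton.1 h1
    have h2 := congrArg (aeval (fun _ => (0 : K))) hc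
    simp at h2
  haveI : Nontrivial (CubicQuot K) := Ideal.Quotient.nontrivial_iff.mpr hIf
  haveI : CharP (CubicQuot K) p :=
    charP_of_injective_ringHom (algebraMap K (CubicQuot K)).injective p
  have hq3 : q % 3 ≠ 0 := by
    intro h
    have h3 : (3 : ℕ) ∣ q := Nat.dvd_of_mod_eq_zero h
    rw [hq] at h3
    have := Nat.Prime.dvd_of_dvd_pow (p := 3) Nat.prime_three h3
    omega
  have hbp : bracketPow
      (Ideal.span {Ideal.Quotient.mk (Ideal.span {X 0 ^ 3 + X 1 ^ 3}
          : Ideal (MvPolynomial (Fin 2) K)) (X 0), Ideal.Quotient.mk _ (X 1)}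
        : Ideal (CubicQuot K)) q
      = Ideal.map
        (Ideal.Quotient.mk (Ideal.span {X 0 ^ 3 + X 1 ^ 3} : Ideal (MvPolynomial (Fin 2) K)))
        (Ideal.span {X 0 ^ q, X 1 ^ q}) := by
    subst hq
    rw [bracketPow_span_pair p e, map_span_pair_mk, map_pow, map_pow]
  rw [hbp]
  exact main_aux K q hq3 _ rfl
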